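/- Let k ≥ 1, d : Fin k → ℕ with d i ≥ 1, m ≥ 1, and N ≥ 1. Write H for the index type ((i : Fin k) → Fin (d i)) × Fin m. Let t : Fin N → Fin k assign to each round the party that moves, and for each j let V_j be a unitary complex matrix indexed by Fin (d (t j)) × Fin m with extension Ṽ_j to H defined by Ṽ_j((a,μ),(a',μ')) = V_j((a (t j), μ),(a' (t j), μ')) if a i = a' i for all i ≠ t j, and 0 otherwise. Let e₀ be the standard basis vector of ℂ^H at index ((fun i => 0), 0) and ψ = Ṽ_N ⋯ Ṽ_1 · e₀. For each i let Π_i be a Hermitian idempotent (d i) × (d i) matrix, and let Π̃_i be the matrix indexed by H with Π̃_i((a,μ),(a',μ')) = Π_i(a i, a' i) if μ = μ' and a l = a' l for all l ≠ i, and 0 otherwise. Assume Π̃_i ψ = Π̃_0 ψ for all i (here 0 denotes the first party). Suppose for each i there are positive semidefinite matrices Z_{i,0}, …, Z_{i,N} of size (d i) × (d i) with Z_{i,N} = Π_i, and for each round 1 ≤ j ≤ N: if i = t j then V_j†·(Z_{i,j} ⊗ I_m)·V_j ⪯ Z_{i,j−1} ⊗ I_m, and if i ≠ t j then Z_{i,j−1}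 = Z_{i,j}. Then Π_{i : Fin k} Re((Z_{i,0})_{0,0}) ≥ ‖Π̃_0 ψ‖². (Certificate form of the multiparty bound p_{1,b}·…·p_{k,b} ≥ p_b.) -/

import Mathlib

open Matrix Kronecker
open scoped ComplexOrder

/-- The extension of a matrix `V` acting on party `t`'s space and the message
space to the joint space of `k` parties (party `i` having space `ℂ^{d i}`) and
an `m`-dimensional message space, acting as identity on all other parties. -/
noncomputable def extParty {k : ℕ} {d : Fin k → ℕ} {m : ℕ} (t : Fin k)
    (V : Matrix (Fin (d t) × Fin m) (Fin (d t) × Fin m) ℂ) :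
    Matrix (((i : Fin k) → Fin (d i)) × Fin m) (((i : Fin k) → Fin (d i)) × Fin m) ℂ :=
  fun p q => if ∀ i, i ≠ t → p.1 i = q.1 i then V (p.1 t, p.2) (q.1 t, q.2) else 0

/-- The extension `Π̃ᵢ` of party `i`'s projection `P` to the joint space,
acting as identity on all other parties and on the message space. -/
noncomputable def extProj {k : ℕ} {d : Fin k → ℕ} (m : ℕ) (i : Fin k)
    (P : Matrix (Fin (d i)) (Fin (d i)) ℂ) :
    Matrix (((l : Fin k) → Fin (d l)) × Fin m) (((l : Fin k) → Fin (d l)) × Fin m) ℂ :=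
  fun p q => if p.2 = q.2 ∧ ∀ l, l ≠ i → p.1 l = q.1 l then P (p.1 i) (q.1 i) else 0

namespace Stmt12

variable {k : ℕ} {d : Fin k → ℕ} {m : ℕ}

/-- mixed operator: arbitrary matrix on party `i₀` ⊗ message space, and
a matrix on each other party's space. -/
noncomputable def mixOp (i₀ : Fin k) (m : ℕ)
    (A : Matrix (Fin (d i₀) × Fin m) (Fin (d i₀) × Fin m) ℂ)
    (Zs : ∀ i, Matrix (Fin (d i)) (Fin (d i)) ℂ) :
    Matrix (((i : Fin k) → Fin (d i)) × Fin m) (((i : Fin k) → Fin (d i)) × Fin m) ℂ :=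
  fun p q => A (p.1 i₀, p.2) (q.1 i₀, q.2) *
    ∏ i ∈ Finset.univ.erase i₀, Zs i (p.1 i) (q.1 i)

lemma sum_pi_mul [NeZero k] (i₀ : Fin k) (f' : Fin (d i₀) → ℂ) (g : ∀ i, Fin (d i) → ℂ) :
    ∑ a : (∀ i, Fin (d i)), f' (a i₀) * ∏ i ∈ Finset.univ.erase i₀, g i (a i)
      = (∑ b, f' b) * ∏ i ∈ Finset.univ.erase i₀, ∑ c, g i c := by
  classical
  set G : ∀ i, Fin (d i) → ℂ := Function.update g i₀ f' with hG
  have h1 : ∀ a : (∀ i, Fin (d i)),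
      f' (a i₀) * ∏ i ∈ Finset.univ.erase i₀, g i (a i) = ∏ i, G i (a i) := by
    intro a
    rw [← Finset.mul_prod_erase Finset.univ (fun i => G i (a i)) (Finset.mem_univ i₀)]
    congr 1
    · simp [hG]
    · exact Finset.prod_congr rfl fun i hi => by
        simp [hG, Function.update_of_ne (Finset.ne_of_mem_erase hi)]
  have h2 : (∑ b, f' b) * ∏ i ∈ Finset.univ.erase i₀, ∑ c, g i c
      = ∏ i, ∑ c, G i c := by
    rw [← Finset.mul_prod_erase Finset.univ (fun i => ∑ c, G i c) (Finset.mem_univ i₀)]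
    congr 1
    · simp [hG]
    · exact Finset.prod_congr rfl fun i hi => by
        simp [hG, Function.update_of_ne (Finset.ne_of_mem_erase hi)]
  simp_rw [h1, h2]
  rw [Fintype.prod_sum]

lemma sum_H [NeZero k] (i₀ : Fin k) (f : Fin (d i₀) × Fin m → ℂ) (g : ∀ i, Fin (d i) → ℂ) :
    ∑ r : (∀ i, Fin (d i)) × Fin m,
        f (r.1 i₀, r.2) * ∏ i ∈ Finset.univ.erase i₀, g i (r.1 i)
      = (∑ bv, f bv) * ∏ i ∈ Finset.univ.erase i₀, ∑ c, g i c := by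
  rw [Fintype.sum_prod_type]
  have : ∀ a : (∀ i, Fin (d i)),
      (∑ ν, f (a i₀, ν) * ∏ i ∈ Finset.univ.erase i₀, g i (a i))
        = (fun b => ∑ ν, f (b, ν)) (a i₀) * ∏ i ∈ Finset.univ.erase i₀, g i (a i) := by
    intro a; rw [Finset.sum_mul]
  simp_rw [this]
  rw [sum_pi_mul i₀ (fun b => ∑ ν, f (b, ν)) g, Fintype.sum_prod_type]

lemma mixOp_mul [NeZero k] (i₀ : Fin k)
    (A A' : Matrix (Fin (d i₀) × Fin m) (Fin (d i₀) × Fin m) ℂ)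
    (Zs Zs' : ∀ i, Matrix (Fin (d i)) (Fin (d i)) ℂ) :
    mixOp i₀ m A Zs * mixOp i₀ m A' Zs'
      = mixOp i₀ m (A * A') (fun i => Zs i * Zs' i) := by
  ext p q
  simp only [Matrix.mul_apply, mixOp]
  have : ∀ r : (∀ i, Fin (d i)) × Fin m,
      (A (p.1 i₀, p.2) (r.1 i₀, r.2) * ∏ i ∈ Finset.univ.erase i₀, Zs i (p.1 i) (r.1 i)) *
        (A' (r.1 i₀, r.2) (q.1 i₀, q.2) * ∏ i ∈ Finset.univ.erase i₀, Zs' i (r.1 i) (q.1 i))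
      = (fun bv => A (p.1 i₀, p.2) bv * A' bv (q.1 i₀, q.2)) (r.1 i₀, r.2) *
          ∏ i ∈ Finset.univ.erase i₀, (Zs i (p.1 i) (r.1 i) * Zs' i (r.1 i) (q.1 i)) := by
    intro r
    rw [Finset.prod_mul_distrib]; ring
  simp_rw [this]
  have hkey := sum_H (m := m) i₀ (fun bv => A (p.1 i₀, p.2) bv * A' bv (q.1 i₀, q.2))
      (fun i x => Zs i (p.1 i) x * Zs' i x (q.1 i))
  exact hkey

lemma mixOp_conjTranspose (i₀ : Fin k)
    (A : Matrix (Fin (d i₀) × Fin m) (Fin (d i₀) × Fin m) ℂ)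
    (Zs : ∀ i, Matrix (Fin (d i)) (Fin (d i)) ℂ) :
    (mixOp i₀ m A Zs)ᴴ = mixOp i₀ m Aᴴ (fun i => (Zs i)ᴴ) := by
  ext p q
  simp only [Matrix.conjTranspose_apply, mixOp, star_mul', ← starRingEnd_apply, _root_.map_mul, map_prod]

open scoped MatrixOrder in
lemma mixOp_posSemidef [NeZero k] (i₀ : Fin k)
    {A : Matrix (Fin (d i₀) × Fin m) (Fin (d i₀) × Fin m) ℂ}
    {Zs : ∀ i, Matrix (Fin (d i)) (Fin (d i)) ℂ}
    (hA : A.PosSemidef) (hZ : ∀ i, (Zs i).PosSemidef) :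
    (mixOp i₀ m A Zs).PosSemidef := by
  have key : mixOp i₀ m A Zs
      = (mixOp i₀ m (CFC.sqrt A) (fun i => CFC.sqrt (Zs i)))ᴴ *
          (mixOp i₀ m (CFC.sqrt A) (fun i => CFC.sqrt (Zs i))) := by
    rw [mixOp_conjTranspose, mixOp_mul, (CFC.sqrt_nonneg A).posSemidef.1,
      CFC.sqrt_mul_sqrt_self A hA.nonneg]
    exact congrArg (mixOp i₀ m A) (funext fun i => by
      rw [(CFC.sqrt_nonneg (Zs i)).posSemidef.1, CFC.sqrt_mul_sqrt_self (Zs i) (hZ i).nonneg])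
  rw [key]
  exact Matrix.posSemidef_conjTranspose_mul_self _

lemma prod_ite_one {s : Finset (Fin k)} (P : Fin k → Prop) [DecidablePred P] :
    (∏ i ∈ s, if P i then (1 : ℂ) else 0) = if ∀ i ∈ s, P i then 1 else 0 := by
  by_cases h : ∀ i ∈ s, P i
  · rw [if_pos h]; exact Finset.prod_eq_one fun i hi => if_pos (h i hi)
  · rw [if_neg h]
    push_neg at h
    obtain ⟨i, hi, hPi⟩ := h
    exact Finset.prod_eq_zero hi (if_neg hPi)

lemma extParty_eq [NeZero k] (i₀ : Fin k)
    (U : Matrix (Fin (d i₀) × Fin m) (Fin (d i₀) × Fin m) ℂ) :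
    extParty i₀ U = mixOp i₀ m U (fun _ => 1) := by
  ext p q
  simp only [extParty, mixOp, Matrix.one_apply]
  rw [prod_ite_one (fun i => p.1 i = q.1 i)]
  by_cases h : ∀ i, i ≠ i₀ → p.1 i = q.1 i
  · rw [if_pos h, if_pos (fun l hl => h l (Finset.ne_of_mem_erase hl)), mul_one]
  · rw [if_neg h,
      if_neg (fun hall => h fun l hl => hall l (Finset.mem_erase.mpr ⟨hl, Finset.mem_univ l⟩)),
      mul_zero]

lemma extProj_eq_self [NeZero k] (i : Fin k) (P : Matrix (Fin (d i)) (Fin (d i)) ℂ) :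
    extProj m i P = mixOp i m (P ⊗ₖ (1 : Matrix (Fin m) (Fin m) ℂ)) (fun _ => 1) := by
  ext p q
  simp only [extProj, mixOp, Matrix.one_apply, Matrix.kroneckerMap_apply]
  rw [prod_ite_one (fun l => p.1 l = q.1 l)]
  by_cases h2 : p.2 = q.2
  · by_cases h : ∀ l, l ≠ i → p.1 l = q.1 l
    · rw [if_pos ⟨h2, h⟩, if_pos h2, if_pos (fun l hl => h l (Finset.ne_of_mem_erase hl)),
        mul_one, mul_one]
    · rw [if_neg (fun hc => h hc.2), if_pos h2, mul_one,
        if_neg (show ¬∀ l ∈ Finset.univ.erase i, p.1 l = q.1 l from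
          fun hall => h fun l hl => hall l (Finset.mem_erase.mpr ⟨hl, Finset.mem_univ l⟩)),
        mul_zero]
  · rw [if_neg (fun hc => h2 hc.1), if_neg h2, mul_zero, zero_mul]

lemma extProj_eq_other [NeZero k] {i i₀ : Fin k} (hne : i ≠ i₀)
    (Ps : ∀ l, Matrix (Fin (d l)) (Fin (d l)) ℂ) :
    extProj m i (Ps i)
      = mixOp i₀ m (1 : Matrix (Fin (d i₀) × Fin m) (Fin (d i₀) × Fin m) ℂ)
        (fun l => if l = i then Ps l else 1) := by
  ext p q
  simp only [extProj, mixOp, Matrix.one_apply]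
  have hmem : i ∈ Finset.univ.erase i₀ := Finset.mem_erase.mpr ⟨hne, Finset.mem_univ i⟩
  rw [← Finset.mul_prod_erase _ _ hmem]
  have hF : ∀ l ∈ (Finset.univ.erase i₀).erase i,
      ((if l = i then Ps l else (1 : Matrix (Fin (d l)) (Fin (d l)) ℂ)) (p.1 l) (q.1 l))
        = if p.1 l = q.1 l then (1:ℂ) else 0 := by
    intro l hl
    rw [if_neg (Finset.ne_of_mem_erase hl), Matrix.one_apply]
  rw [Finset.prod_congr rfl hF, prod_ite_one (fun l => p.1 l = q.1 l), if_pos (rfl : i = i)]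
  by_cases h2 : p.2 = q.2
  · by_cases h : ∀ l, l ≠ i → p.1 l = q.1 l
    · rw [if_pos ⟨h2, h⟩,
        if_pos (show ((p.1 i₀, p.2) : Fin (d i₀) × Fin m) = (q.1 i₀, q.2) by
          rw [h i₀ (Ne.symm hne), h2]),
        if_pos (fun l hl => h l (Finset.ne_of_mem_erase hl)), one_mul, mul_one]
    · rw [if_neg (fun hc => h hc.2)]
      push_neg at h
      obtain ⟨l, hl, hpq⟩ := h
      by_cases hl0 : l = i₀
      · subst hl0
        rw [if_neg (show ¬((p.1 l, p.2) : Fin (d l) × Fin m) = (q.1 l, q.2) from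
            fun hc => hpq (congrArg Prod.fst hc)), zero_mul]
      · rw [if_neg (show ¬∀ l' ∈ (Finset.univ.erase i₀).erase i, p.1 l' = q.1 l' from
            fun hall => hpq (hall l (Finset.mem_erase.mpr ⟨hl,
              Finset.mem_erase.mpr ⟨hl0, Finset.mem_univ l⟩⟩))), mul_zero, mul_zero]
  · rw [if_neg (fun hc => h2 hc.1),
      if_neg (show ¬((p.1 i₀, p.2) : Fin (d i₀) × Fin m) = (q.1 i₀, q.2) from
        fun hc => absurd (congrArg Prod.snd hc) h2), zero_mul]

lemma extProj_conjTranspose (i : Fin k) (P : Matrix (Fin (d i)) (Fin (d i)) ℂ) :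
    (extProj m i P)ᴴ = extProj m i Pᴴ := by
  ext p q
  simp only [Matrix.conjTranspose_apply, extProj, apply_ite (star : ℂ → ℂ), star_zero]
  exact if_congr ⟨fun h => ⟨h.1.symm, fun l hl => (h.2 l hl).symm⟩,
    fun h => ⟨h.1.symm, fun l hl => (h.2 l hl).symm⟩⟩ rfl rfl

lemma extProj_mul [NeZero k] (i : Fin k) (P Q : Matrix (Fin (d i)) (Fin (d i)) ℂ) :
    extProj m i P * extProj m i Q = extProj m i (P * Q) := by
  rw [extProj_eq_self, extProj_eq_self, extProj_eq_self (m := m) i (P * Q), mixOp_mul,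
    ← Matrix.mul_kronecker_mul, one_mul]
  exact congrArg _ (funext fun l => one_mul _)

noncomputable def bigOp {k : ℕ} {d : Fin k → ℕ} (m : ℕ)
    (Zs : ∀ i, Matrix (Fin (d i)) (Fin (d i)) ℂ) :
    Matrix (((i : Fin k) → Fin (d i)) × Fin m) (((i : Fin k) → Fin (d i)) × Fin m) ℂ :=
  fun p q => (if p.2 = q.2 then 1 else 0) * ∏ i, Zs i (p.1 i) (q.1 i)

lemma bigOp_eq_mixOp [NeZero k] (i₀ : Fin k) (Zs : ∀ i, Matrix (Fin (d i)) (Fin (d i)) ℂ) :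
    bigOp m Zs = mixOp i₀ m (Zs i₀ ⊗ₖ (1 : Matrix (Fin m) (Fin m) ℂ)) Zs := by
  ext p q
  simp only [bigOp, mixOp, Matrix.kroneckerMap_apply, Matrix.one_apply]
  rw [← Finset.mul_prod_erase Finset.univ (fun i => Zs i (p.1 i) (q.1 i)) (Finset.mem_univ i₀)]
  ring

lemma mixOp_congr (i₀ : Fin k) (A : Matrix (Fin (d i₀) × Fin m) (Fin (d i₀) × Fin m) ℂ)
    {Zs Zs' : ∀ i, Matrix (Fin (d i)) (Fin (d i)) ℂ} (h : ∀ i, i ≠ i₀ → Zs i = Zs' i) :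
    mixOp i₀ m A Zs = mixOp i₀ m A Zs' := by
  ext p q
  simp only [mixOp]
  congr 1
  exact Finset.prod_congr rfl fun i hi => by rw [h i (Finset.ne_of_mem_erase hi)]

lemma mixOp_sub (i₀ : Fin k) (A A' : Matrix (Fin (d i₀) × Fin m) (Fin (d i₀) × Fin m) ℂ)
    (Zs : ∀ i, Matrix (Fin (d i)) (Fin (d i)) ℂ) :
    mixOp i₀ m (A - A') Zs = mixOp i₀ m A Zs - mixOp i₀ m A' Zs := by
  ext p q
  simp only [mixOp, Matrix.sub_apply]
  ring

end Stmt12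

open Stmt12

/-- Certificate form of the multiparty bound `p_{1,b} ⋯ p_{k,b} ≥ p_b`:
given, for each party `i`, a dual-feasible sequence `Z i j` for the SDP of
`k-1` cheaters against honest party `i`, the product of the initial entries
bounds the honest probability of the outcome from below.  Here `χ j` is the
honest state after round `j` (round `j` being played by party `t j` using the
unitary `V j`), and `Proj i` is party `i`'s final projection for the outcome. -/
theorem stmt_12 (k : ℕ) (hk : 0 < k) (d : Fin k → ℕ) (hd : ∀ i, 0 < d i)
    (m : ℕ) (hm : 0 < m) (N : ℕ) (hN : 1 ≤ N)
    (t : Fin N → Fin k)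
    (V : ∀ j : Fin N, Matrix (Fin (d (t j)) × Fin m) (Fin (d (t j)) × Fin m) ℂ)
    (hV : ∀ j, V j ∈ Matrix.unitaryGroup (Fin (d (t j)) × Fin m) ℂ)
    (χ : ℕ → (((i : Fin k) → Fin (d i)) × Fin m → ℂ))
    (hχ0 : χ 0 = fun p => if p = (fun i => ⟨0, hd i⟩, ⟨0, hm⟩) then 1 else 0)
    (hχstep : ∀ j : Fin N, χ ((j : ℕ) + 1) = (extParty (t j) (V j)).mulVec (χ (j : ℕ)))
    (Proj : ∀ i, Matrix (Fin (d i)) (Fin (d i)) ℂ)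
    (hProjH : ∀ i, (Proj i).IsHermitian) (hProj2 : ∀ i, Proj i * Proj i = Proj i)
    (hagree : ∀ i, (extProj m i (Proj i)).mulVec (χ N) =
      (extProj m ⟨0, hk⟩ (Proj ⟨0, hk⟩)).mulVec (χ N))
    (Z : ∀ i, ℕ → Matrix (Fin (d i)) (Fin (d i)) ℂ)
    (hZpsd : ∀ i, ∀ j ≤ N, (Z i j).PosSemidef)
    (hZN : ∀ i, Z i N = Proj i)
    (hZstep : ∀ j : Fin N, (Z (t j) (j : ℕ) ⊗ₖ (1 : Matrix (Fin m) (Fin m) ℂ) -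
      (V j)ᴴ * (Z (t j) ((j : ℕ) + 1) ⊗ₖ (1 : Matrix (Fin m) (Fin m) ℂ)) * V j).PosSemidef)
    (hZfix : ∀ j : Fin N, ∀ i, i ≠ t j → Z i (j : ℕ) = Z i ((j : ℕ) + 1)) :
    ∏ i, (Z i 0 ⟨0, hd i⟩ ⟨0, hd i⟩).re ≥
    (star ((extProj m ⟨0, hk⟩ (Proj ⟨0, hk⟩)).mulVec (χ N)) ⬝ᵥ
      ((extProj m ⟨0, hk⟩ (Proj ⟨0, hk⟩)).mulVec (χ N))).re := by
  haveI : NeZero k := ⟨hk.ne'⟩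
  set i₀ : Fin k := ⟨0, hk⟩ with hi₀
  set F : ℕ → ℝ :=
    fun n => (star (χ n) ⬝ᵥ (bigOp m (fun i => Z i n)).mulVec (χ n)).re with hFdef
  -- monotonicity step
  have hstep : ∀ j : Fin N, F ((j : ℕ) + 1) ≤ F (j : ℕ) := by
    intro j
    set n := (j : ℕ) with hn
    set E := extParty (t j) (V j) with hEdef
    have hE : E = mixOp (t j) m (V j) (fun _ => 1) := extParty_eq _ _
    have hEH : Eᴴ = mixOp (t j) m (V j)ᴴ (fun _ => 1) := by
      rw [hE, mixOp_conjTranspose]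
      exact congrArg _ (funext fun i => Matrix.conjTranspose_one)
    have hW1 : bigOp m (fun i => Z i (n + 1))
        = mixOp (t j) m (Z (t j) (n + 1) ⊗ₖ (1 : Matrix (Fin m) (Fin m) ℂ))
            (fun i => Z i n) := by
      rw [bigOp_eq_mixOp (t j)]
      exact mixOp_congr _ _ fun i hi => (hZfix j i hi).symm
    have hcomb : Eᴴ * (bigOp m (fun i => Z i (n + 1)) * E)
        = mixOp (t j) m
            ((V j)ᴴ * (Z (t j) (n + 1) ⊗ₖ (1 : Matrix (Fin m) (Fin m) ℂ)) * V j)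
            (fun i => Z i n) := by
      rw [hW1, hEH, hE, mixOp_mul, mixOp_mul, ← Matrix.mul_assoc]
      exact congrArg _ (funext fun i => by rw [one_mul, mul_one])
    have hsub : bigOp m (fun i => Z i n) - Eᴴ * (bigOp m (fun i => Z i (n + 1)) * E)
        = mixOp (t j) m
            (Z (t j) n ⊗ₖ (1 : Matrix (Fin m) (Fin m) ℂ) -
              (V j)ᴴ * (Z (t j) (n + 1) ⊗ₖ (1 : Matrix (Fin m) (Fin m) ℂ)) * V j)
            (fun i => Z i n) := by
      rw [hcomb, bigOp_eq_mixOp (t j), mixOp_sub]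
    have hpsd : (bigOp m (fun i => Z i n)
        - Eᴴ * (bigOp m (fun i => Z i (n + 1)) * E)).PosSemidef := by
      rw [hsub]
      exact mixOp_posSemidef _ (hZstep j) (fun i => hZpsd i n (Nat.le_of_lt j.2))
    have hquad : star (χ (n + 1)) ⬝ᵥ (bigOp m (fun i => Z i (n + 1))).mulVec (χ (n + 1))
        = star (χ n) ⬝ᵥ (Eᴴ * (bigOp m (fun i => Z i (n + 1)) * E)).mulVec (χ n) := by
      rw [hχstep j, ← hEdef, Matrix.star_mulVec, Matrix.mulVec_mulVec,
        ← Matrix.dotProduct_mulVec, Matrix.mulVec_mulVec]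
    have hpos := (Complex.le_def.mp (hpsd.dotProduct_mulVec_nonneg (χ n))).1
    rw [Matrix.sub_mulVec, dotProduct_sub, Complex.sub_re, Complex.zero_re] at hpos
    simp only [hFdef]
    rw [hquad]
    linarith
  -- chain down to 0
  have hchain : ∀ n, n ≤ N → F n ≤ F 0 := by
    intro n
    induction n with
    | zero => exact fun _ => le_rfl
    | succ n ih =>
      intro hn
      have h1 : n < N := Nat.lt_of_succ_le hn
      exact le_trans (hstep ⟨n, h1⟩) (ih h1.le)
  -- initial value
  have hF0 : F 0 = ∏ i, (Z i 0 ⟨0, hd i⟩ ⟨0, hd i⟩).re := by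
    have hsingle : ∀ (M : Matrix (((i : Fin k) → Fin (d i)) × Fin m)
        (((i : Fin k) → Fin (d i)) × Fin m) ℂ),
        star (fun p => if p = ((fun i => ⟨0, hd i⟩ : ∀ i, Fin (d i)), (⟨0, hm⟩ : Fin m))
            then (1:ℂ) else 0) ⬝ᵥ
          M.mulVec (fun p => if p = ((fun i => ⟨0, hd i⟩ : ∀ i, Fin (d i)), (⟨0, hm⟩ : Fin m))
            then (1:ℂ) else 0)
        = M (fun i => ⟨0, hd i⟩, ⟨0, hm⟩) (fun i => ⟨0, hd i⟩, ⟨0, hm⟩) := by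
      intro M
      simp [dotProduct, Matrix.mulVec, apply_ite (star : ℂ → ℂ), ite_mul, mul_ite,
        mul_zero, zero_mul, mul_one, one_mul, Finset.sum_ite_eq, Finset.sum_ite_eq']
    have hdiag : ∀ i, Z i 0 ⟨0, hd i⟩ ⟨0, hd i⟩ = ((Z i 0 ⟨0, hd i⟩ ⟨0, hd i⟩).re : ℂ) := by
      intro i
      have h := (hZpsd i 0 (Nat.zero_le N)).1
      have h2 : star (Z i 0 ⟨0, hd i⟩ ⟨0, hd i⟩) = Z i 0 ⟨0, hd i⟩ ⟨0, hd i⟩ :=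
        congrFun (congrFun h ⟨0, hd i⟩) ⟨0, hd i⟩
      have him : (Z i 0 ⟨0, hd i⟩ ⟨0, hd i⟩).im = 0 := Complex.conj_eq_iff_im.mp h2
      exact Complex.ext rfl (by simp [him])
    simp only [hFdef]
    rw [hχ0, hsingle]
    simp only [bigOp]
    rw [if_true, one_mul, Finset.prod_congr rfl (fun i _ => hdiag i),
      ← Complex.ofReal_prod, Complex.ofReal_re]
  -- final value
  set φ := (extProj m i₀ (Proj i₀)).mulVec (χ N) with hφdef
  have hφfix : ∀ i, (extProj m i (Proj i)).mulVec φ = φ := by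
    intro i
    have h12 : extProj m i (Proj i) *ᵥ χ N = extProj m i₀ (Proj i₀) *ᵥ χ N :=
      (hagree i).trans hφdef
    rw [hφdef]
    conv_lhs => rw [← h12]
    rw [Matrix.mulVec_mulVec, extProj_mul, hProj2 i, h12]
  have hkey : ∀ s : Finset (Fin k), (∀ x ∈ s, x ≠ i₀) →
      (mixOp i₀ m (Proj i₀ ⊗ₖ (1 : Matrix (Fin m) (Fin m) ℂ))
        (fun l => if l ∈ s then Proj l else 1)).mulVec (χ N) = φ := by
    intro s
    induction s using Finset.induction_on with
    | empty =>
      intro _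
      have h1 : (fun l => if l ∈ (∅ : Finset (Fin k)) then Proj l else 1)
          = fun l : Fin k => (1 : Matrix (Fin (d l)) (Fin (d l)) ℂ) := by
        funext l
        simp
      rw [h1, ← extProj_eq_self]
    | insert a s' hni ih =>
      intro hs
      have ha : a ≠ i₀ := hs a (Finset.mem_insert_self a s')
      have hsplit : mixOp i₀ m (Proj i₀ ⊗ₖ (1 : Matrix (Fin m) (Fin m) ℂ))
          (fun l => if l ∈ insert a s' then Proj l else 1)
          = extProj m a (Proj a) * mixOp i₀ m (Proj i₀ ⊗ₖ (1 : Matrix (Fin m) (Fin m) ℂ))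
              (fun l => if l ∈ s' then Proj l else 1) := by
        rw [extProj_eq_other ha Proj, mixOp_mul, one_mul]
        exact congrArg _ (funext fun l => by
          by_cases hl : l = a
          · subst hl
            rw [if_pos rfl, if_pos (Finset.mem_insert_self l s'), if_neg hni, mul_one]
          · rw [if_neg hl]
            by_cases hl2 : l ∈ s'
            · rw [if_pos hl2, if_pos (Finset.mem_insert_of_mem hl2), one_mul]
            · rw [if_neg hl2, if_neg (by simp [hl, hl2]), one_mul])
      rw [hsplit, ← Matrix.mulVec_mulVec, ih (fun x hx => hs x (Finset.mem_insert_of_mem hx)),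
        hφfix a]
  have hWN : (bigOp m Proj).mulVec (χ N) = φ := by
    rw [bigOp_eq_mixOp i₀ Proj,
      mixOp_congr i₀ _ (Zs' := fun l => if l ∈ Finset.univ.erase i₀ then Proj l else 1)
        (fun i hi => by simp [hi]),
      hkey (Finset.univ.erase i₀) (fun x hx => Finset.ne_of_mem_erase hx)]
  have hFN : F N = (star φ ⬝ᵥ φ).re := by
    have h1 : star φ ⬝ᵥ φ = star (χ N) ⬝ᵥ (bigOp m (fun i => Z i N)).mulVec (χ N) := by
      have hZP : (fun i => Z i N) = Proj := funext hZN
      rw [hZP, hWN, hφdef, Matrix.star_mulVec, ← Matrix.dotProduct_mulVec,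
        extProj_conjTranspose, (hProjH i₀).eq, ← hφdef, hφfix i₀]
    simp only [hFdef]
    rw [h1]
  have := hchain N le_rfl
  rw [hFN, hF0] at this
  exact this
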